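/- A nonzero coherent chain of composition degree −1 (i.e., whose support is empty or a singleton, equivalently has at most one element of each degree with at most one element total above the lowest) is a single basis element: if a is a coherent chain with |a|_c = −1 then a = b for some basis element b. -/
import Mathlib


/-! Chains in an augmented directed complex with basis.  An augmented directed complex
with basis `B` is encoded by a degree function `deg : B → ℕ`, a differential given on
basis elements `diff : B → (B →₀ ℤ)` and an augmentation `aug : B → ℤ` on the basis
(the predicate `IsADC` expresses the chain-complex and augmentation axioms).
A *chain* is a finitely supported function `B → ℕ`, i.e. a nonnegative combination of
basis elements. -/

namespace Chains

/-- Positive part of an integral combination, as a chain. -/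
noncomputable def posPart {B : Type*} (x : B →₀ ℤ) : B →₀ ℕ :=
  x.mapRange Int.toNat (by simp)

/-- Negative part of an integral combination, as a chain. -/
noncomputable def negPart {B : Type*} (x : B →₀ ℤ) : B →₀ ℕ :=
  x.mapRange (fun k => (-k).toNat) (by simp)

/-- Inclusion of chains into integral combinations. -/
noncomputable def toInt {B : Type*} (a : B →₀ ℕ) : B →₀ ℤ :=
  a.mapRange (Nat.cast : ℕ → ℤ) (by simp)

/-- Pointwise minimum (`∧`) of chains. -/
noncomputable def cmin {B : Type*} [DecidableEq B] (a a' : B →₀ ℕ) : B →₀ ℕ :=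
  Finsupp.zipWith min (by simp) a a'

/-- Pointwise maximum (`∨`) of chains. -/
noncomputable def cmax {B : Type*} [DecidableEq B] (a a' : B →₀ ℕ) : B →₀ ℕ :=
  Finsupp.zipWith max (by simp) a a'

/-- Truncated subtraction (`∖`) of chains. -/
noncomputable def csub {B : Type*} [DecidableEq B] (a a' : B →₀ ℕ) : B →₀ ℕ :=
  Finsupp.zipWith (fun m n => m - n) (by simp) a a'

/-- The differential extended to chains. -/
noncomputable def bdry {B : Type*} (diff : B → B →₀ ℤ) (a : B →₀ ℕ) : B →₀ ℤ :=
  a.sum fun b k => (k : ℤ) • diff b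

/-- The positive (`α = true`) and negative (`α = false`) part of the differential. -/
noncomputable def bdryP {B : Type*} (diff : B → B →₀ ℤ) (α : Bool) (a : B →₀ ℕ) :
    B →₀ ℕ :=
  if α then posPart (bdry diff a) else negPart (bdry diff a)

open Classical in
/-- The degree-`k` homogeneous part `(a)ₖ` of a chain. -/
noncomputable def homog {B : Type*} (deg : B → ℕ) (k : ℕ) (a : B →₀ ℕ) : B →₀ ℕ :=
  a.filter fun b => deg b = k

open Classical in
/-- The `k`-rest `rₖ(a)`: the part of a chain in degrees `≤ k`. -/
noncomputable def trunc {B : Type*} (deg : B → ℕ) (k : ℕ) (a : B →₀ ℕ) : B →₀ ℕ :=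
  a.filter fun b => deg b ≤ k

/-- One step of the source/target operator: `∂^α((a)_{n+1}) + rₙ(a)`. -/
noncomputable def dstep {B : Type*} [DecidableEq B] (deg : B → ℕ) (diff : B → B →₀ ℤ)
    (α : Bool) (n : ℕ) (a : B →₀ ℕ) : B →₀ ℕ :=
  bdryP diff α (homog deg (n + 1) a) + trunc deg n a

/-- Auxiliary downward recursion for the source/target operators. -/
noncomputable def dmapAux {B : Type*} [DecidableEq B] (deg : B → ℕ) (diff : B → B →₀ ℤ)
    (α : Bool) : ℕ → ℕ → (B →₀ ℕ) → (B →₀ ℕ)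
  | _, 0, a => a
  | n, k + 1, a => dstep deg diff α n (dmapAux deg diff α (n + 1) k a)

/-- Degree of a chain (0 for the zero chain). -/
def degC {B : Type*} (deg : B → ℕ) (a : B →₀ ℕ) : ℕ := a.support.sup deg

/-- The source (`α = false`) and target (`α = true`) operators `d^α_n` on chains:
`d^α_n a = a` if `|a| ≤ n`, and otherwise
`d^α_n a = ∂^α((d^α_{n+1}a)_{n+1}) + rₙ(d^α_{n+1}a)`. -/
noncomputable def dmap {B : Type*} [DecidableEq B] (deg : B → ℕ) (diff : B → B →₀ ℤ)
    (α : Bool) (n : ℕ) (a : B →₀ ℕ) : B →₀ ℕ :=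
  dmapAux deg diff α n (degC deg a - n) a

/-- The augmentation evaluated on a chain. -/
noncomputable def augC {B : Type*} (aug : B → ℤ) (a : B →₀ ℕ) : ℤ :=
  a.sum fun b k => (k : ℤ) * aug b

/-- `e(a) := e(d⁺₀ a)`. -/
noncomputable def eC {B : Type*} [DecidableEq B] (deg : B → ℕ) (diff : B → B →₀ ℤ)
    (aug : B → ℤ) (a : B →₀ ℕ) : ℤ :=
  augC aug (dmap deg diff true 0 a)

/-- A chain is coherent when `e(a) = 1`. -/
def Coherent {B : Type*} [DecidableEq B] (deg : B → ℕ) (diff : B → B →₀ ℤ)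
    (aug : B → ℤ) (a : B →₀ ℕ) : Prop :=
  eC deg diff aug a = 1

/-- The axioms of an augmented directed complex (with basis): the differential decreases
degree by one, vanishes in degree 0, squares to zero, and is annihilated by the
augmentation. -/
structure IsADC {B : Type*} (deg : B → ℕ) (diff : B → B →₀ ℤ) (aug : B → ℤ) : Prop where
  diff_deg : ∀ b b', b' ∈ (diff b).support → deg b' + 1 = deg b
  diff_zero : ∀ b, deg b = 0 → diff b = 0
  diff_sq : ∀ b, ((diff b).sum fun b' k => k • diff b') = 0
  aug_diff : ∀ b, deg b = 1 → ((diff b).sum fun b' k => k * aug b') = 0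

/-- The basis is unitary when the table `⟨b⟩` of every basis element is coherent,
i.e. `e(d^α₀⟨b⟩) = 1` for both `α`. -/
def Unitary {B : Type*} [DecidableEq B] (deg : B → ℕ) (diff : B → B →₀ ℤ)
    (aug : B → ℤ) : Prop :=
  ∀ (b : B) (α : Bool), augC aug (dmap deg diff α 0 (Finsupp.single b 1)) = 1

/-- The elementary relation `x ⊙ₙ y` on basis elements of degree `≥ n`:
`⟨x⟩ₙ⁻ ∧ ⟨y⟩ₙ⁺ ≠ 0`. -/
def relO {B : Type*} [DecidableEq B] (deg : B → ℕ) (diff : B → B →₀ ℤ)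
    (n : ℕ) (x y : B) : Prop :=
  n ≤ deg x ∧ n ≤ deg y ∧
    ¬ Disjoint (dmap deg diff false n (Finsupp.single x 1)).support
        (dmap deg diff true n (Finsupp.single y 1)).support

/-- The basis is loop-free when for every `n` the reflexive-transitive closure of `⊙ₙ`
is a partial order (i.e. is antisymmetric). -/
def LoopFree {B : Type*} [DecidableEq B] (deg : B → ℕ) (diff : B → B →₀ ℤ) : Prop :=
  ∀ (n : ℕ) (x y : B), Relation.ReflTransGen (relO deg diff n) x y →
    Relation.ReflTransGen (relO deg diff n) y x → x = y

/-- The composition degree `|a|_c` of a chain, an element of `ℤ` (with value `-1` when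
the defining set is empty): `sup{ n | ∃ b ≠ b' ∈ supp a, |b| ≥ |b'| > n }`. -/
noncomputable def compDeg {B : Type*} (deg : B → ℕ) (a : B →₀ ℕ) : ℤ :=
  sSup (insert (-1) {n : ℤ | ∃ b ∈ a.support, ∃ b' ∈ a.support,
    b ≠ b' ∧ (deg b' : ℤ) ≤ (deg b : ℤ) ∧ n < (deg b' : ℤ)})

/-- The `n`-composition of chains: `x *ₙ y := (x - d⁻ₙ(x) + y)₊`. -/
noncomputable def compC {B : Type*} [DecidableEq B] (deg : B → ℕ) (diff : B → B →₀ ℤ)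
    (n : ℕ) (x y : B →₀ ℕ) : B →₀ ℕ :=
  posPart (toInt x - toInt (dmap deg diff false n x) + toInt y)

/-- Iterated `n`-composition of a list of chains (associating to the right). -/
noncomputable def compList {B : Type*} [DecidableEq B] (deg : B → ℕ)
    (diff : B → B →₀ ℤ) (n : ℕ) : List (B →₀ ℕ) → (B →₀ ℕ)
  | [] => 0
  | [x] => x
  | x :: y :: l => compC deg diff n x (compList deg diff n (y :: l))

end Chains


namespace Chains

variable {B : Type*} [DecidableEq B] {deg : B → ℕ} {diff : B → B →₀ ℤ} {aug : B → ℤ}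

lemma toNat_natCast_mul (m : ℕ) (k : ℤ) : ((m : ℤ) * k).toNat = m * k.toNat := by
  rcases le_or_gt 0 k with hk | hk
  · obtain ⟨n, rfl⟩ := Int.eq_ofNat_of_zero_le hk
    rw [← Int.natCast_mul, Int.toNat_natCast, Int.toNat_natCast]
  · rw [Int.toNat_of_nonpos (mul_nonpos_of_nonneg_of_nonpos (Int.natCast_nonneg m) hk.le),
      Int.toNat_of_nonpos hk.le, mul_zero]

lemma posPart_nsmul (m : ℕ) (x : B →₀ ℤ) : posPart (m • x) = m • posPart x := by
  ext b
  simp [posPart, Finsupp.mapRange_apply, nsmul_eq_mul, toNat_natCast_mul, smul_eq_mul]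

lemma negPart_nsmul (m : ℕ) (x : B →₀ ℤ) : negPart (m • x) = m • negPart x := by
  ext b
  simp only [negPart, Finsupp.mapRange_apply, Finsupp.smul_apply, nsmul_eq_mul, smul_eq_mul]
  rw [show -((m : ℤ) * x b) = (m : ℤ) * (-(x b)) by ring, toNat_natCast_mul]

lemma bdry_nsmul (m : ℕ) (a : B →₀ ℕ) : bdry diff (m • a) = m • bdry diff a := by
  unfold bdry
  rw [Finsupp.sum_smul_index' (by simp), Finsupp.smul_sum]
  exact Finsupp.sum_congr fun b _ => by
    rw [smul_eq_mul, Nat.cast_mul, mul_smul, Nat.cast_smul_eq_nsmul]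

lemma homog_nsmul (k m : ℕ) (a : B →₀ ℕ) : homog deg k (m • a) = m • homog deg k a := by
  classical
  ext b
  simp only [homog, Finsupp.filter_apply, Finsupp.smul_apply, smul_eq_mul]
  split <;> simp

lemma trunc_nsmul (k m : ℕ) (a : B →₀ ℕ) : trunc deg k (m • a) = m • trunc deg k a := by
  classical
  ext b
  simp only [trunc, Finsupp.filter_apply, Finsupp.smul_apply, smul_eq_mul]
  split <;> simp

lemma homog_add (k : ℕ) (x y : B →₀ ℕ) :
    homog deg k (x + y) = homog deg k x + homog deg k y := by
  classical
  ext b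
  simp only [homog, Finsupp.filter_apply, Finsupp.add_apply]
  split <;> simp

lemma trunc_add (k : ℕ) (x y : B →₀ ℕ) :
    trunc deg k (x + y) = trunc deg k x + trunc deg k y := by
  classical
  ext b
  simp only [trunc, Finsupp.filter_apply, Finsupp.add_apply]
  split <;> simp

lemma homog_eq_zero {c : B →₀ ℕ} (hc : ∀ b ∈ c.support, deg b = 0) (n : ℕ) :
    homog deg (n + 1) c = 0 := by
  classical
  ext b
  simp only [homog, Finsupp.filter_apply, Finsupp.coe_zero, Pi.zero_apply]
  split
  · rename_i h
    by_contra hb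
    have := hc b (Finsupp.mem_support_iff.mpr hb)
    omega
  · rfl

lemma trunc_eq_self {c : B →₀ ℕ} (hc : ∀ b ∈ c.support, deg b = 0) (n : ℕ) :
    trunc deg n c = c := by
  classical
  ext b
  simp only [trunc, Finsupp.filter_apply]
  split
  · rfl
  · rename_i h
    by_contra hb
    have := hc b (Finsupp.mem_support_iff.mpr fun h0 => hb h0.symm)
    omega

lemma bdryP_nsmul (α : Bool) (m : ℕ) (x : B →₀ ℕ) :
    bdryP diff α (m • x) = m • bdryP diff α x := by
  cases α <;> simp [bdryP, bdry_nsmul, posPart_nsmul, negPart_nsmul]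

lemma dstep_nsmul (α : Bool) (n m : ℕ) (a : B →₀ ℕ) :
    dstep deg diff α n (m • a) = m • dstep deg diff α n a := by
  unfold dstep
  rw [homog_nsmul, trunc_nsmul, bdryP_nsmul, smul_add]

lemma dmapAux_nsmul (α : Bool) (m : ℕ) :
    ∀ (k n : ℕ) (a : B →₀ ℕ),
      dmapAux deg diff α n k (m • a) = m • dmapAux deg diff α n k a := by
  intro k
  induction k with
  | zero => intro n a; rfl
  | succ k ih =>
    intro n a
    show dstep deg diff α n (dmapAux deg diff α (n + 1) k (m • a)) = _
    rw [ih, dstep_nsmul]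
    rfl

lemma dstep_add_c (α : Bool) (n : ℕ) (x : B →₀ ℕ) {c : B →₀ ℕ}
    (hc : ∀ b ∈ c.support, deg b = 0) :
    dstep deg diff α n (x + c) = dstep deg diff α n x + c := by
  unfold dstep
  rw [homog_add, homog_eq_zero hc, add_zero, trunc_add, trunc_eq_self hc, add_assoc]

lemma dmapAux_add_c (α : Bool) {c : B →₀ ℕ} (hc : ∀ b ∈ c.support, deg b = 0) :
    ∀ (k n : ℕ) (x : B →₀ ℕ),
      dmapAux deg diff α n k (x + c) = dmapAux deg diff α n k x + c := by
  intro k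
  induction k with
  | zero => intro n x; rfl
  | succ k ih =>
    intro n x
    show dstep deg diff α n (dmapAux deg diff α (n + 1) k (x + c)) = _
    rw [ih, dstep_add_c α n _ hc]
    rfl

lemma augC_add (x y : B →₀ ℕ) : augC aug (x + y) = augC aug x + augC aug y :=
  Finsupp.sum_add_index' (by simp) (by intro b k k'; push_cast; ring)

lemma augC_nsmul (m : ℕ) (x : B →₀ ℕ) : augC aug (m • x) = m * augC aug x := by
  unfold augC
  rw [Finsupp.sum_smul_index' (by simp), Finsupp.mul_sum]
  exact Finsupp.sum_congr fun b _ => by rw [smul_eq_mul]; push_cast; ring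

lemma augC_single (b : B) (k : ℕ) : augC aug (Finsupp.single b k) = k * aug b := by
  unfold augC
  rw [Finsupp.sum_single_index (by simp)]

lemma degC_single_one (b : B) : degC deg (Finsupp.single b 1) = deg b := by
  unfold degC
  rw [Finsupp.support_single_ne_zero b one_ne_zero, Finset.sup_singleton]

lemma dmap_eq_of_degC_zero (α : Bool) (a : B →₀ ℕ) (h : degC deg a = 0) :
    dmap deg diff α 0 a = a := by
  rw [dmap, h]
  rfl

lemma aug_eq_one_of_deg_zero (hU : Unitary deg diff aug) {b : B} (hb : deg b = 0) :
    aug b = 1 := by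
  have h := hU b true
  rw [dmap_eq_of_degC_zero true _ (by rw [degC_single_one, hb]), augC_single] at h
  simpa using h

lemma augC_eq_natSum {c : B →₀ ℕ} (hU : Unitary deg diff aug)
    (hc : ∀ b ∈ c.support, deg b = 0) :
    augC aug c = ((c.support.sum c : ℕ) : ℤ) := by
  unfold augC Finsupp.sum
  rw [Nat.cast_sum]
  exact Finset.sum_congr rfl fun b hb => by
    simp [aug_eq_one_of_deg_zero hU (hc b hb)]

lemma compDeg_min_deg_zero {a : B →₀ ℕ} (h : compDeg deg a = -1) {b b' : B}
    (hb : b ∈ a.support) (hb' : b' ∈ a.support) (hne : b ≠ b') (hle : deg b' ≤ deg b) :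
    deg b' = 0 := by
  by_contra h0
  have hmem : (0 : ℤ) ∈ insert (-1 : ℤ) {n : ℤ | ∃ b ∈ a.support, ∃ b' ∈ a.support,
      b ≠ b' ∧ (deg b' : ℤ) ≤ (deg b : ℤ) ∧ n < (deg b' : ℤ)} :=
    Set.mem_insert_iff.mpr (Or.inr ⟨b, hb, b', hb', hne, by exact_mod_cast hle, by omega⟩)
  have hbdd : BddAbove (insert (-1 : ℤ) {n : ℤ | ∃ b ∈ a.support, ∃ b' ∈ a.support,
      b ≠ b' ∧ (deg b' : ℤ) ≤ (deg b : ℤ) ∧ n < (deg b' : ℤ)}) := by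
    refine ⟨(degC deg a : ℤ), ?_⟩
    rintro z (rfl | ⟨x, hx, x', hx', -, hxx, hz⟩)
    · omega
    · have h1 : deg x' ≤ degC deg a := Finset.le_sup hx'
      omega
  have h2 := le_csSup hbdd hmem
  rw [compDeg] at h
  rw [h] at h2
  omega

end Chains

open Chains in
/-- A nonzero coherent chain of composition degree `-1` in an augmented directed complex
with loop-free unitary basis is a single basis element. -/
theorem coherent_compDeg_neg_one_is_single {B : Type*} [DecidableEq B]
    (deg : B → ℕ) (diff : B → B →₀ ℤ) (aug : B → ℤ)
    (hADC : IsADC deg diff aug) (hU : Unitary deg diff aug) (hLF : LoopFree deg diff)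
    (a : B →₀ ℕ) (ha : a ≠ 0) (hcoh : Coherent deg diff aug a)
    (hcd : compDeg deg a = -1) :
    ∃ b : B, a = Finsupp.single b 1 := by
  classical
  obtain ⟨c, hc_def⟩ : ∃ c, c = a.filter (fun b => deg b = 0) := ⟨_, rfl⟩
  obtain ⟨p, hp_def⟩ : ∃ p, p = a.filter (fun b => ¬ deg b = 0) := ⟨_, rfl⟩
  have hsplit : c + p = a := by rw [hc_def, hp_def]; exact Finsupp.filter_pos_add_filter_neg a _
  have hc0 : ∀ b ∈ c.support, deg b = 0 := by
    intro b hb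
    rw [Finsupp.mem_support_iff, hc_def, Finsupp.filter_apply] at hb
    by_contra h0
    rw [if_neg h0] at hb
    exact hb rfl
  have hp0 : ∀ b ∈ p.support, deg b ≠ 0 ∧ b ∈ a.support := by
    intro b hb
    rw [Finsupp.mem_support_iff, hp_def, Finsupp.filter_apply] at hb
    by_cases h0 : deg b = 0
    · rw [if_neg (by simpa using h0)] at hb; exact absurd rfl hb
    · rw [if_pos h0] at hb
      exact ⟨h0, Finsupp.mem_support_iff.mpr hb⟩
  have hpuniq : ∀ b ∈ p.support, ∀ b' ∈ p.support, b = b' := by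
    intro b hb b' hb'
    by_contra hne
    obtain ⟨hbd, hba⟩ := hp0 b hb
    obtain ⟨hbd', hba'⟩ := hp0 b' hb'
    rcases le_total (deg b') (deg b) with hle | hle
    · exact hbd' (compDeg_min_deg_zero hcd hba hba' hne hle)
    · exact hbd (compDeg_min_deg_zero hcd hba' hba (Ne.symm hne) hle)
  by_cases hp : p = 0
  · -- a is concentrated in degree 0
    have haeq : a = c := by rw [← hsplit, hp, add_zero]
    have ha0 : ∀ b ∈ a.support, deg b = 0 := by rw [haeq]; exact hc0
    have hdeg : degC deg a = 0 :=
      Nat.le_zero.mp (Finset.sup_le fun b hb => le_of_eq (ha0 b hb))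
    rw [Coherent, eC, dmap_eq_of_degC_zero true a hdeg, augC_eq_natSum hU ha0] at hcoh
    have hsum : a.support.sum a = 1 := by exact_mod_cast hcoh
    obtain ⟨b₀, hb₀⟩ := Finsupp.support_nonempty_iff.mpr ha
    have hsub : a.support ⊆ {b₀} := by
      intro b hb
      rw [Finset.mem_singleton]
      by_contra hne
      have hb' : b ∈ a.support.erase b₀ := Finset.mem_erase.mpr ⟨hne, hb⟩
      have h1 : a b ≤ (a.support.erase b₀).sum a :=
        Finset.single_le_sum (fun _ _ => Nat.zero_le _) hb'
      have h2 : a b₀ + (a.support.erase b₀).sum a = a.support.sum a :=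
        Finset.add_sum_erase _ _ hb₀
      have h3 : 1 ≤ a b₀ := Nat.one_le_iff_ne_zero.mpr (Finsupp.mem_support_iff.mp hb₀)
      have h4 : 1 ≤ a b := Nat.one_le_iff_ne_zero.mpr (Finsupp.mem_support_iff.mp hb)
      omega
    have hab₀ : a b₀ = 1 := by
      have h1 : a b₀ ≤ a.support.sum a :=
        Finset.single_le_sum (fun _ _ => Nat.zero_le _) hb₀
      have h3 : 1 ≤ a b₀ := Nat.one_le_iff_ne_zero.mpr (Finsupp.mem_support_iff.mp hb₀)
      omega
    exact ⟨b₀, Finsupp.eq_single_iff.mpr ⟨hsub, hab₀⟩⟩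
  · -- a has exactly one basis element of positive degree
    obtain ⟨y, hy⟩ := Finsupp.support_nonempty_iff.mpr hp
    have hps : p = Finsupp.single y (p y) :=
      Finsupp.support_subset_singleton.mp fun b hb =>
        Finset.mem_singleton.mpr (hpuniq b hb y hy)
    obtain ⟨hyd, hya⟩ := hp0 y hy
    have hm : p y ≠ 0 := Finsupp.mem_support_iff.mp hy
    have ha' : a = Finsupp.single y (p y) + c := by rw [← hsplit, ← hps, add_comm]
    have hya' : y ∈ a.support := hya
    have hdegC : degC deg a = deg y := by
      refine le_antisymm (Finset.sup_le fun b hb => ?_) (Finset.le_sup hya')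
      have hab : a b ≠ 0 := Finsupp.mem_support_iff.mp hb
      have : c b + p b ≠ 0 := by rw [← Finsupp.add_apply, hsplit]; exact hab
      by_cases hpb : p b = 0
      · have hcb : c b ≠ 0 := by omega
        rw [hc0 b (Finsupp.mem_support_iff.mpr hcb)]
        exact Nat.zero_le _
      · rw [hpuniq b (Finsupp.mem_support_iff.mpr hpb) y hy]
    have hUy : augC aug (dmapAux deg diff true 0 (deg y) (Finsupp.single y 1)) = 1 := by
      have h := hU y true
      rwa [dmap, degC_single_one, Nat.sub_zero] at h
    have key : dmapAux deg diff true 0 (deg y) (Finsupp.single y (p y) + c)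
        = p y • dmapAux deg diff true 0 (deg y) (Finsupp.single y 1) + c := by
      rw [dmapAux_add_c true hc0,
        show Finsupp.single y (p y) = p y • Finsupp.single y 1 by
          rw [Finsupp.smul_single, smul_eq_mul, mul_one],
        dmapAux_nsmul]
    rw [Coherent, eC, dmap, hdegC, Nat.sub_zero, ha', key, augC_add, augC_nsmul, hUy,
      mul_one, augC_eq_natSum hU hc0] at hcoh
    have hm1 : p y = 1 := by omega
    have hcsum : c.support.sum c = 0 := by omega
    have hczero : c = 0 := by
      rw [← Finsupp.support_eq_empty]
      by_contra hne
      obtain ⟨b, hb⟩ := Finset.nonempty_iff_ne_empty.mpr hne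
      have h1 : c b ≤ c.support.sum c :=
        Finset.single_le_sum (fun _ _ => Nat.zero_le _) hb
      have h2 : c b ≠ 0 := Finsupp.mem_support_iff.mp hb
      omega
    exact ⟨y, by rw [ha', hm1, hczero, add_zero]⟩
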